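/- Let n > 1 and let ρ(ζ) = exp( e^{2ζ}/4 − ((n+3)/(n−1)) ζ ) and dμ = ρ(ζ) dζ. Then there exists R₀ ∈ ℝ such that for every R ≥ R₀ and every continuously differentiable function w : ℝ → ℝ with ∫_ℝ (w² + (w')²) dμ < ∞, one has the weighted Poincaré inequality ∫_R^∞ w(ζ)² dμ(ζ) ≤ 2 e^{−2R} ∫_R^∞ w'(ζ)² dμ(ζ). -/

import Mathlib

open Real MeasureTheory

open Filter Topology

set_option maxHeartbeats 1000000 in
/-- Weighted Poincaré inequality: for `R` large enough and any `C¹` function `w` with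
`∫ (w² + w'²) dμ < ∞`, one has `∫_R^∞ w² dμ ≤ 2 e^{-2R} ∫_R^∞ (w')² dμ`, where
`dμ = ρ dζ` and `ρ(ζ) = exp(e^{2ζ}/4 - ((n+3)/(n-1)) ζ)`. -/
theorem weighted_poincare (n : ℝ) (hn : 1 < n)
    (ρ : ℝ → ℝ)
    (hρ : ρ = fun ζ : ℝ =>
      Real.exp (Real.exp (2 * ζ) / 4 - (n + 3) / (n - 1) * ζ)) :
    ∃ R₀ : ℝ, ∀ R ≥ R₀, ∀ w : ℝ → ℝ, ContDiff ℝ 1 w →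
      Integrable (fun ζ => (w ζ ^ 2 + deriv w ζ ^ 2) * ρ ζ) →
      ∫ ζ in Set.Ioi R, w ζ ^ 2 * ρ ζ ≤
        2 * Real.exp (-2 * R) * ∫ ζ in Set.Ioi R, deriv w ζ ^ 2 * ρ ζ := by
  set c : ℝ := (n + 3) / (n - 1) with hcdef
  have hcpos : 0 < c := div_pos (by linarith) (by linarith)
  refine ⟨Real.log (8 * c + 16), ?_⟩
  intro R hR w hw hint
  have hRpos : 0 < R := lt_of_lt_of_le (Real.log_pos (by linarith)) hR
  set E : ℝ := Real.exp (2 * R) with hEdef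
  have hEpos : 0 < E := Real.exp_pos _
  have hE : 8 * c + 16 ≤ E := by
    calc 8 * c + 16 = Real.exp (Real.log (8 * c + 16)) :=
          (Real.exp_log (by linarith)).symm
      _ ≤ Real.exp R := Real.exp_le_exp.2 hR
      _ ≤ E := Real.exp_le_exp.2 (by linarith)
  -- basic facts
  have hρpos : ∀ x, 0 < ρ x := by intro x; rw [hρ]; exact Real.exp_pos _
  have hρc : Continuous ρ := by rw [hρ]; fun_prop
  have hwc : Continuous w := hw.continuous
  have hwd : ∀ x : ℝ, HasDerivAt w (deriv w x) x := fun x =>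
    ((hw.differentiable one_ne_zero) x).hasDerivAt
  have hw'c : Continuous (deriv w) := hw.continuous_deriv le_rfl
  -- derivative of ρ
  have hρd : ∀ x : ℝ, HasDerivAt ρ ((Real.exp (2 * x) / 2 - c) * ρ x) x := by
    intro x
    rw [hρ]
    have h1 : HasDerivAt (fun y : ℝ => 2 * y) 2 x := by
      simpa using (hasDerivAt_id x).const_mul (2 : ℝ)
    have h2 : HasDerivAt (fun y : ℝ => Real.exp (2 * y)) (Real.exp (2 * x) * 2) x := h1.exp
    have hc1 : HasDerivAt (fun y : ℝ => c * y) c x := by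
      simpa using (hasDerivAt_id x).const_mul c
    have h3 : HasDerivAt (fun y : ℝ => Real.exp (2 * y) / 4 - c * y)
        (Real.exp (2 * x) * 2 / 4 - c) x := (h2.div_const 4).sub hc1
    have h4 := h3.exp
    convert h4 using 1
    ring
  -- derivative of F = w^2 ρ
  set F : ℝ → ℝ := fun x => w x ^ 2 * ρ x with hFdef
  set F' : ℝ → ℝ := fun x =>
    2 * w x * deriv w x * ρ x + w x ^ 2 * ((Real.exp (2 * x) / 2 - c) * ρ x) with hF'def
  have hFd : ∀ x : ℝ, HasDerivAt F (F' x) x := by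
    intro x
    have := ((hwd x).pow 2).mul (hρd x)
    refine HasDerivAt.congr_deriv (f := fun y => w y ^ 2 * ρ y) this ?_
    simp [hF'def]
  have hF'c : Continuous F' := by rw [hF'def]; fun_prop
  have hFpos : ∀ x, 0 ≤ F x := fun x => mul_nonneg (sq_nonneg _) (hρpos x).le
  -- integrability
  have h1 : Integrable (fun ζ => w ζ ^ 2 * ρ ζ) := by
    refine hint.mono ((hwc.pow 2).mul hρc).aestronglyMeasurable (ae_of_all _ fun ζ => ?_)
    rw [Real.norm_eq_abs, Real.norm_eq_abs,
      abs_of_nonneg (mul_nonneg (sq_nonneg _) (hρpos ζ).le),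
      abs_of_nonneg (mul_nonneg (by positivity) (hρpos ζ).le)]
    nlinarith [sq_nonneg (deriv w ζ), (hρpos ζ).le]
  have h2 : Integrable (fun ζ => deriv w ζ ^ 2 * ρ ζ) := by
    refine hint.mono ((hw'c.pow 2).mul hρc).aestronglyMeasurable (ae_of_all _ fun ζ => ?_)
    rw [Real.norm_eq_abs, Real.norm_eq_abs,
      abs_of_nonneg (mul_nonneg (sq_nonneg _) (hρpos ζ).le),
      abs_of_nonneg (mul_nonneg (by positivity) (hρpos ζ).le)]
    nlinarith [sq_nonneg (w ζ), (hρpos ζ).le]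
  set A : ℝ := ∫ ζ in Set.Ioi R, w ζ ^ 2 * ρ ζ with hAdef
  set B : ℝ := ∫ ζ in Set.Ioi R, deriv w ζ ^ 2 * ρ ζ with hBdef
  have hA0 : 0 ≤ A := setIntegral_nonneg measurableSet_Ioi
    (fun x _ => mul_nonneg (sq_nonneg _) (hρpos x).le)
  have hB0 : 0 ≤ B := setIntegral_nonneg measurableSet_Ioi
    (fun x _ => mul_nonneg (sq_nonneg _) (hρpos x).le)
  set K : ℝ := E / 4 - c with hKdef
  have hK : 0 < K := by rw [hKdef]; nlinarith
  -- key inequality for each b ≥ R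
  have key : ∀ b, R ≤ b →
      K * (∫ x in R..b, w x ^ 2 * ρ x) ≤ F b + (4 / E) * B := by
    intro b hb
    -- FTC
    have hftc : ∫ x in R..b, F' x = F b - F R :=
      intervalIntegral.integral_eq_sub_of_hasDerivAt (fun x _ => hFd x)
        (hF'c.intervalIntegrable R b)
    -- pointwise bound on [R, b]
    have hptw : ∀ x ∈ Set.Icc R b,
        K * (w x ^ 2 * ρ x) - (4 / E) * (deriv w x ^ 2 * ρ x) ≤ F' x := by
      intro x hx
      have hex : E ≤ Real.exp (2 * x) := Real.exp_le_exp.2 (by linarith [hx.1])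
      have hρx := (hρpos x).le
      have hcore : K * w x ^ 2 - (4 / E) * deriv w x ^ 2 ≤
          2 * w x * deriv w x + w x ^ 2 * (Real.exp (2 * x) / 2 - c) := by
        rw [hKdef]
        have hsq : 0 ≤ (E * w x / 2 + 2 * deriv w x) ^ 2 := sq_nonneg _
        have hxx : E * w x ^ 2 ≤ Real.exp (2 * x) * w x ^ 2 :=
          mul_le_mul_of_nonneg_right hex (sq_nonneg _)
        have h4 : E * (4 / E) = 4 := by field_simp
        refine le_of_mul_le_mul_left ?_ hEpos
        nlinarith [hsq, hxx, sq_nonneg (w x), sq_nonneg (deriv w x), hEpos.le]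
      calc K * (w x ^ 2 * ρ x) - (4 / E) * (deriv w x ^ 2 * ρ x)
          = (K * w x ^ 2 - (4 / E) * deriv w x ^ 2) * ρ x := by ring
        _ ≤ (2 * w x * deriv w x + w x ^ 2 * (Real.exp (2 * x) / 2 - c)) * ρ x :=
            mul_le_mul_of_nonneg_right hcore hρx
        _ = F' x := by rw [hF'def]; ring
    -- integrate the pointwise bound
    have hint1 : IntervalIntegrable (fun x => w x ^ 2 * ρ x) volume R b :=
      ((hwc.pow 2).mul hρc).intervalIntegrable R b
    have hint2 : IntervalIntegrable (fun x => deriv w x ^ 2 * ρ x) volume R b :=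
      ((hw'c.pow 2).mul hρc).intervalIntegrable R b
    have hmono : ∫ x in R..b,
        (K * (w x ^ 2 * ρ x) - (4 / E) * (deriv w x ^ 2 * ρ x)) ≤ ∫ x in R..b, F' x :=
      intervalIntegral.integral_mono_on hb
        ((hint1.const_mul K).sub (hint2.const_mul (4 / E)))
        (hF'c.intervalIntegrable R b) hptw
    rw [intervalIntegral.integral_sub (hint1.const_mul K) (hint2.const_mul (4 / E)),
      intervalIntegral.integral_const_mul, intervalIntegral.integral_const_mul, hftc] at hmono
    -- ∫_R^b w'^2 ρ ≤ B
    have hsub : ∫ x in R..b, deriv w x ^ 2 * ρ x ≤ B := by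
      rw [intervalIntegral.integral_of_le hb]
      refine setIntegral_mono_set h2.integrableOn
        (ae_of_all _ fun x => mul_nonneg (sq_nonneg _) (hρpos x).le)
        (HasSubset.Subset.eventuallyLE Set.Ioc_subset_Ioi_self)
    have hFR : 0 ≤ F R := hFpos R
    have h4E : 0 ≤ 4 / E := by positivity
    nlinarith [mul_le_mul_of_nonneg_left hsub h4E]
  -- limiting argument
  have main : K * A ≤ 4 / E * B := by
    refine le_of_forall_pos_le_add fun η hη => ?_
    set δ : ℝ := η / (K + 1) with hδdef
    have hδ : 0 < δ := by positivity
    have htend : Tendsto (fun b => ∫ x in R..b, w x ^ 2 * ρ x) atTop (𝓝 A) :=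
      intervalIntegral_tendsto_integral_Ioi R h1.integrableOn tendsto_id
    have hev : ∀ᶠ b in atTop, A - δ ≤ ∫ x in R..b, w x ^ 2 * ρ x :=
      htend.eventually (eventually_ge_nhds (by linarith))
    obtain ⟨M, hM⟩ := eventually_atTop.1 hev
    -- find b ≥ max M R with F b ≤ δ
    have hsmall : ∃ b, max M R ≤ b ∧ F b ≤ δ := by
      by_contra hcon
      push_neg at hcon
      have hconst : Integrable (fun _ : ℝ => δ)
          (volume.restrict (Set.Ioi (max M R))) := by
        refine (h1.restrict (s := Set.Ioi (max M R))).mono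
          aestronglyMeasurable_const ?_
        refine (ae_restrict_iff' measurableSet_Ioi).2 (ae_of_all _ fun x hx => ?_)
        have := hcon x (le_of_lt hx)
        rw [Real.norm_eq_abs, Real.norm_eq_abs, abs_of_nonneg hδ.le,
          abs_of_nonneg (hFpos x)]
        exact this.le
      rcases (integrable_const_iff).1 hconst with h | h
      · exact hδ.ne' h
      · have := measure_lt_top (volume.restrict (Set.Ioi (max M R))) Set.univ
        simp [Real.volume_Ioi] at this
    obtain ⟨b, hbM, hbδ⟩ := hsmall
    have hbR : R ≤ b := le_trans (le_max_right _ _) hbM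
    have hAb : A - δ ≤ ∫ x in R..b, w x ^ 2 * ρ x :=
      hM b (le_trans (le_max_left _ _) hbM)
    have hkey := key b hbR
    have hKδ : (K + 1) * δ = η := by
      rw [hδdef]; field_simp
    have hprod := mul_le_mul_of_nonneg_left hAb hK.le
    clear_value A B K E δ F F'
    nlinarith [hprod, hkey, hbδ, hKδ, hK.le]
  -- conclude
  have hexp : Real.exp (-2 * R) = E⁻¹ := by
    rw [hEdef, ← Real.exp_neg]; ring_nf
  rw [hexp]
  have hKA : E / 8 * A ≤ K * A :=
    mul_le_mul_of_nonneg_right (by rw [hKdef]; nlinarith) hA0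
  have h1' : E / 8 * A ≤ 4 / E * B := hKA.trans main
  have hE16 : 16 ≤ E := by linarith
  have hstep : A ≤ 8 / E * (4 / E * B) := by
    have h := mul_le_mul_of_nonneg_left h1' (by positivity : (0:ℝ) ≤ 8 / E)
    calc A = 8 / E * (E / 8 * A) := by field_simp
      _ ≤ 8 / E * (4 / E * B) := h
  have hcoef : 8 / E * (4 / E) ≤ 2 / E := by
    rw [div_mul_div_comm, div_le_div_iff₀ (by positivity) hEpos]
    nlinarith [hE16, hEpos]
  calc A ≤ 8 / E * (4 / E * B) := hstep
    _ = 8 / E * (4 / E) * B := by ring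
    _ ≤ 2 * E⁻¹ * B := by
        have h2E : (2:ℝ) * E⁻¹ = 2 / E := by rw [div_eq_mul_inv]
        rw [h2E]
        exact mul_le_mul_of_nonneg_right hcoef hB0
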